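/- Regret equals calibration: let c₁,…,c_t be a forecasting sequence, i₁,…,i_t a binning sequence, and u a utility function with a selection of optimal decisions x* and induced proper scoring rule L^u. Then (1) U_t(c) = −B^{L^u}_t(c) − H^{L^u}_t, and (2) sup_{ξ : I → X} (1/t) Σ_{s=1}^t u(a_s, ξ(i_s)) = −R^{L^u}_t(i) − H^{L^u}_t, this supremum being attained (at ξ(i) = x*(ā_t(i))). Consequently, if the binning i refines the forecasts c (i.e., i_s = i_r implies c_s = c_r), then Reg^u_t(c;i) := sup_{ξ : I → X} (1/t) Σ_{s=1}^t u(a_s, ξ(i_s)) − U_t(c) equals K^{L^u}_t(c;i). -/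
import Mathlib


open scoped BigOperators

/-- Regret equals calibration: for a forecasting sequence `c`,
a binning sequence `i`, and a utility `u` with optimal-decision selection `x*`
and induced proper scoring rule `L^u`:
(1) `U_t(c) = −B^{L^u}_t(c) − H^{L^u}_t`;
(2) `sup_ξ (1/t) Σ_s u(a_s, ξ(i_s)) = −R^{L^u}_t(i) − H^{L^u}_t`, the supremum
being attained at `ξ(i) = x*(ā_t(i))`;
(3) if `i` refines `c`, then `Reg^u_t(c;i) = K^{L^u}_t(c;i)`. -/
theorem stmt_14
    {A : Type*} [Fintype A] [Nonempty A] [DecidableEq A]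
    {X : Type*} {I : Type*} [DecidableEq I]
    (C : Set (EuclideanSpace ℝ A))
    (hC : C = {c : EuclideanSpace ℝ A | (∀ a, 0 ≤ c a) ∧ ∑ a, c a = 1})
    (u : A → X → ℝ) (xstar : EuclideanSpace ℝ A → X)
    (hopt : ∀ d ∈ C, ∀ x : X, (∑ a, d a * u a x) ≤ ∑ a, d a * u a (xstar d))
    (Lu : EuclideanSpace ℝ A → EuclideanSpace ℝ A → ℝ)
    (hLu : ∀ d c, Lu d c = -∑ a, d a * u a (xstar c))
    (t : ℕ) (ht : 1 ≤ t)
    (a : Fin t → A)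
    (act : Fin t → EuclideanSpace ℝ A)
    (hact : ∀ s, act s = EuclideanSpace.single (a s) (1 : ℝ))
    (c : Fin t → EuclideanSpace ℝ A) (hc : ∀ s, c s ∈ C)
    (bin : Fin t → I)
    (n : I → ℕ)
    (hn : ∀ i, n i = (Finset.univ.filter (fun s => bin s = i)).card)
    (abar : I → EuclideanSpace ℝ A)
    (habar : ∀ i, 0 < n i →
      abar i = ((n i : ℝ))⁻¹ • ∑ s ∈ Finset.univ.filter (fun s => bin s = i), act s)
    -- the scores
    (Ut B K R H : ℝ)
    (hUt : Ut = (1 / (t : ℝ)) * ∑ s, u (a s) (xstar (c s)))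
    (hB : B = (1 / (t : ℝ)) * ∑ s, (Lu (act s) (c s) - Lu (act s) (act s)))
    (hK : K = (1 / (t : ℝ)) *
      ∑ s, (Lu (abar (bin s)) (c s) - Lu (abar (bin s)) (abar (bin s))))
    (hR : R = (1 / (t : ℝ)) * ∑ s, (Lu (act s) (abar (bin s)) - Lu (act s) (act s)))
    (hH : H = (1 / (t : ℝ)) * ∑ s, Lu (act s) (act s)) :
    Ut = -B - H ∧
    (∀ ξ : I → X, (1 / (t : ℝ)) * ∑ s, u (a s) (ξ (bin s)) ≤ -R - H) ∧
    ((1 / (t : ℝ)) * ∑ s, u (a s) (xstar (abar (bin s))) = -R - H) ∧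
    ((∀ s r, bin s = bin r → c s = c r) → (-R - H) - Ut = K) := by

  have htpos : (0:ℝ) < t := by exact_mod_cast Nat.lt_of_lt_of_le Nat.zero_lt_one ht
  have hteq : (t : ℝ) ≠ 0 := ne_of_gt htpos
  set fb : I → Finset (Fin t) := fun i => Finset.univ.filter (fun s => bin s = i) with hfb
  -- evaluation of Lu at a unit vector
  have hact_eval : ∀ s (c' : EuclideanSpace ℝ A), Lu (act s) c' = -u (a s) (xstar c') := by
    intro s c'
    rw [hLu, hact]
    congr 1
    simp [EuclideanSpace.single_apply]
  -- coordinates of the fiber average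
  have hsum_apply : ∀ (S : Finset (Fin t)) (a' : A),
      (∑ s ∈ S, act s) a' = ∑ s ∈ S, act s a' := by
    intro S a'
    induction S using Finset.cons_induction with
    | empty => rfl
    | cons s S hs ih => rw [Finset.sum_cons, Finset.sum_cons, PiLp.add_apply, ih]
  have happ : ∀ i a', 0 < n i → abar i a' = (n i : ℝ)⁻¹ * ∑ s ∈ fb i, act s a' := by
    intro i a' hi
    rw [habar i hi, PiLp.smul_apply, smul_eq_mul, hsum_apply]
  -- inner product with the fiber average
  have hfiber : ∀ i (x : X), 0 < n i →
      (∑ a', abar i a' * u a' x) = (n i : ℝ)⁻¹ * ∑ s ∈ fb i, u (a s) x := by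
    intro i x hi
    calc ∑ a', abar i a' * u a' x
        = (n i : ℝ)⁻¹ * ∑ a', (∑ s ∈ fb i, act s a') * u a' x := by
          rw [Finset.mul_sum]
          refine Finset.sum_congr rfl fun a' _ => ?_
          rw [happ i a' hi, mul_assoc]
      _ = (n i : ℝ)⁻¹ * ∑ s ∈ fb i, ∑ a', act s a' * u a' x := by
          congr 1
          simp_rw [Finset.sum_mul]
          rw [Finset.sum_comm]
      _ = (n i : ℝ)⁻¹ * ∑ s ∈ fb i, u (a s) x := by
          congr 1
          refine Finset.sum_congr rfl fun s _ => ?_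
          simp [hact, EuclideanSpace.single_apply]
  have hnne : ∀ i, 0 < n i → ((n i : ℝ)) ≠ 0 := by
    intro i hi
    exact_mod_cast hi.ne'
  have fibsum : ∀ i (x : X), 0 < n i →
      ∑ s ∈ fb i, u (a s) x = (n i : ℝ) * ∑ a', abar i a' * u a' x := by
    intro i x hi
    rw [hfiber i x hi, ← mul_assoc, mul_inv_cancel₀ (hnne i hi), one_mul]
  -- the fiber average lies in C
  have habarC : ∀ i, 0 < n i → abar i ∈ C := by
    intro i hi
    rw [hC]
    refine ⟨fun a' => ?_, ?_⟩
    · rw [happ i a' hi]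
      refine mul_nonneg (by positivity) (Finset.sum_nonneg fun s _ => ?_)
      rw [hact, EuclideanSpace.single_apply]
      split <;> norm_num
    · have h1 : ∀ s : Fin t, ∑ a', act s a' = 1 := by
        intro s
        simp [hact, EuclideanSpace.single_apply]
      calc ∑ a', abar i a' = (n i : ℝ)⁻¹ * ∑ a', ∑ s ∈ fb i, act s a' := by
            rw [Finset.mul_sum]
            exact Finset.sum_congr rfl fun a' _ => happ i a' hi
        _ = (n i : ℝ)⁻¹ * ∑ s ∈ fb i, ∑ a', act s a' := by rw [Finset.sum_comm]
        _ = (n i : ℝ)⁻¹ * (n i : ℝ) := by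
            simp_rw [h1]
            rw [Finset.sum_const, nsmul_eq_mul, mul_one, hn i]
        _ = 1 := inv_mul_cancel₀ (hnne i hi)
  -- fiberwise decomposition of sums
  have hdec : ∀ F : Fin t → ℝ, ∑ s, F s = ∑ i ∈ Finset.univ.image bin, ∑ s ∈ fb i, F s :=
    fun F => (Finset.sum_fiberwise_of_maps_to
      (fun s _ => Finset.mem_image_of_mem bin (Finset.mem_univ s)) F).symm
  have hnpos : ∀ i ∈ Finset.univ.image bin, 0 < n i := by
    intro i hi
    obtain ⟨s, -, hs⟩ := Finset.mem_image.mp hi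
    rw [hn]
    exact Finset.card_pos.mpr ⟨s, Finset.mem_filter.mpr ⟨Finset.mem_univ s, hs⟩⟩
  have hmemfb : ∀ i, ∀ s ∈ fb i, bin s = i := fun i s hs => (Finset.mem_filter.mp hs).2
  -- key grouping identity
  have key2 : ∀ x : Fin t → X, (∀ s r, bin s = bin r → x s = x r) →
      ∑ s, (∑ a', abar (bin s) a' * u a' (x s)) = ∑ s, u (a s) (x s) := by
    intro x hx
    rw [hdec (fun s => ∑ a', abar (bin s) a' * u a' (x s)), hdec (fun s => u (a s) (x s))]
    refine Finset.sum_congr rfl fun i hi => ?_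
    have hni := hnpos i hi
    obtain ⟨s₀, -, hs₀⟩ := Finset.mem_image.mp hi
    have hxc : ∀ s ∈ fb i, x s = x s₀ := fun s hs => hx s s₀ (by rw [hmemfb i s hs, hs₀])
    calc ∑ s ∈ fb i, ∑ a', abar (bin s) a' * u a' (x s)
        = ∑ s ∈ fb i, ∑ a', abar i a' * u a' (x s₀) := by
          refine Finset.sum_congr rfl fun s hs => ?_
          rw [hmemfb i s hs, hxc s hs]
      _ = (fb i).card • (∑ a', abar i a' * u a' (x s₀)) := Finset.sum_const _
      _ = (n i : ℝ) * (∑ a', abar i a' * u a' (x s₀)) := by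
          rw [hn i, nsmul_eq_mul]
      _ = ∑ s ∈ fb i, u (a s) (x s₀) := (fibsum i (x s₀) hni).symm
      _ = ∑ s ∈ fb i, u (a s) (x s) :=
          Finset.sum_congr rfl fun s hs => by rw [hxc s hs]
  -- the value of -R - H
  have hRH : -R - H = (1 / (t : ℝ)) * ∑ s, u (a s) (xstar (abar (bin s))) := by
    have h2 : R + H = (1 / (t : ℝ)) * ∑ s, Lu (act s) (abar (bin s)) := by
      rw [hR, hH, ← mul_add, ← Finset.sum_add_distrib]
      congr 1
      exact Finset.sum_congr rfl fun s _ => sub_add_cancel _ _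
    have h3 : ∑ s, Lu (act s) (abar (bin s)) = -∑ s, u (a s) (xstar (abar (bin s))) := by
      rw [← Finset.sum_neg_distrib]
      exact Finset.sum_congr rfl fun s _ => hact_eval s _
    rw [h3] at h2
    linarith
  refine ⟨?_, ?_, hRH.symm, ?_⟩
  · -- part 1
    have h2 : B + H = (1 / (t : ℝ)) * ∑ s, Lu (act s) (c s) := by
      rw [hB, hH, ← mul_add, ← Finset.sum_add_distrib]
      congr 1
      exact Finset.sum_congr rfl fun s _ => sub_add_cancel _ _
    have h3 : ∑ s, Lu (act s) (c s) = -∑ s, u (a s) (xstar (c s)) := by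
      rw [← Finset.sum_neg_distrib]
      exact Finset.sum_congr rfl fun s _ => hact_eval s _
    rw [h3] at h2
    rw [hUt]
    linarith
  · -- part 2
    intro ξ
    rw [hRH]
    have hsum : ∑ s, u (a s) (ξ (bin s)) ≤ ∑ s, u (a s) (xstar (abar (bin s))) := by
      rw [hdec (fun s => u (a s) (ξ (bin s))), hdec (fun s => u (a s) (xstar (abar (bin s))))]
      refine Finset.sum_le_sum fun i hi => ?_
      have hni := hnpos i hi
      have e1 : ∑ s ∈ fb i, u (a s) (ξ (bin s)) = ∑ s ∈ fb i, u (a s) (ξ i) :=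
        Finset.sum_congr rfl fun s hs => by rw [hmemfb i s hs]
      have e2 : ∑ s ∈ fb i, u (a s) (xstar (abar (bin s)))
          = ∑ s ∈ fb i, u (a s) (xstar (abar i)) :=
        Finset.sum_congr rfl fun s hs => by rw [hmemfb i s hs]
      rw [e1, e2, fibsum i (ξ i) hni, fibsum i (xstar (abar i)) hni]
      exact mul_le_mul_of_nonneg_left (hopt (abar i) (habarC i hni) (ξ i))
        (by positivity)
    have : (0:ℝ) < 1 / t := by positivity
    nlinarith [hsum, this]
  · -- part 4
    intro href
    have k1 : ∑ s, (∑ a', abar (bin s) a' * u a' (xstar (c s)))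
        = ∑ s, u (a s) (xstar (c s)) :=
      key2 (fun s => xstar (c s)) (fun s r h => congrArg xstar (href s r h))
    have k2 : ∑ s, (∑ a', abar (bin s) a' * u a' (xstar (abar (bin s))))
        = ∑ s, u (a s) (xstar (abar (bin s))) :=
      key2 (fun s => xstar (abar (bin s))) (fun s r h => congrArg (fun i => xstar (abar i)) h)
    have hKsum : ∑ s, (Lu (abar (bin s)) (c s) - Lu (abar (bin s)) (abar (bin s)))
        = ∑ s, u (a s) (xstar (abar (bin s))) - ∑ s, u (a s) (xstar (c s)) := by
      simp_rw [hLu]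
      rw [Finset.sum_sub_distrib, Finset.sum_neg_distrib, Finset.sum_neg_distrib, k1, k2]
      ring
    rw [hRH, hUt, hK, hKsum]
    ring
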